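/- Let $\mathcal{G} = \langle r, s : r^{2^k p} = s^2 = e, \ s r s^{-1} = r^{2^{k-1}p - 1} \rangle$ with $k \ge 2$ and $p$ an odd prime. Then the power graph $P(\mathcal{G})$ is isomorphic to the disjoint union of: the power graph of the cyclic group $\mathbb{Z}_{2^k p}$ together with attached structure, specifically $P(\mathcal{G}) \cong P(\mathbb{Z}_{2^k p}) \cup 2^{k-1}p\, K_2 \cup 2^{k-2}p\,(P(\langle r^{2^{k-1}p}\rangle) + K_2)$, where the unions identify the common vertices $e$ (and $e, r^{2^{k-1}p}$ respectively) appropriately. -/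

import Mathlib

inductive Gen : Type
  | r | s

open FreeGroup in
def grpRels (k p : ℕ) : Set (FreeGroup Gen) :=
  {of Gen.r ^ (2 ^ k * p), of Gen.s ^ 2,
   of Gen.s * of Gen.r * (of Gen.s)⁻¹ * (of Gen.r ^ (2 ^ (k - 1) * p - 1))⁻¹}

abbrev GKP (k p : ℕ) := PresentedGroup (grpRels k p)

def rG (k p : ℕ) : GKP k p := PresentedGroup.of Gen.r
def sG (k p : ℕ) : GKP k p := PresentedGroup.of Gen.s

def powerGraph (G : Type*) [Group G] : SimpleGraph G where
  Adj x y := x ≠ y ∧ ((∃ m : ℕ, 0 < m ∧ y = x ^ m) ∨ ∃ m : ℕ, 0 < m ∧ x = y ^ m)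
  symm := ⟨fun _ _ h => ⟨h.1.symm, h.2.symm⟩⟩
  loopless := ⟨fun _ h => h.1 rfl⟩

/-- Vertex set of the model graph: the cyclic group Z_{2^k p}, together with
2^{k-1} p pendant vertices, and 2^{k-2} p pairs forming K_2's joined to {e, u}. -/
abbrev ModelV (k p : ℕ) : Type :=
  Multiplicative (ZMod (2 ^ k * p)) ⊕ (Fin (2 ^ (k - 1) * p) ⊕ Fin (2 ^ (k - 2) * p) × Fin 2)

/-- The model graph: P(Z_{2^k p}) ∪ 2^{k-1}p K_2 ∪ 2^{k-2}p (P(⟨u⟩) + K_2),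
where the unions identify e (resp. e and u = 2^{k-1}p) appropriately. -/
def modelGraph (k p : ℕ) : SimpleGraph (ModelV k p) :=
  SimpleGraph.fromRel fun x y =>
    match x, y with
    | Sum.inl a, Sum.inl b => (powerGraph (Multiplicative (ZMod (2 ^ k * p)))).Adj a b
    | Sum.inl a, Sum.inr (Sum.inl _) => a = 1
    | Sum.inl a, Sum.inr (Sum.inr _) =>
        a = 1 ∨ a = Multiplicative.ofAdd ((2 ^ (k - 1) * p : ℕ) : ZMod (2 ^ k * p))
    | Sum.inr (Sum.inr ji), Sum.inr (Sum.inr ji') => ji.1 = ji'.1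
    | _, _ => False

namespace PG

lemma multHom_ext {n : ℕ} [NeZero n] {A : Type*} [Monoid A]
    {f g : Multiplicative (ZMod n) →* A}
    (h : f (Multiplicative.ofAdd (1 : ZMod n)) = g (Multiplicative.ofAdd (1 : ZMod n))) :
    f = g := by
  refine MonoidHom.ext fun x => ?_
  have hx : x = (Multiplicative.ofAdd (1 : ZMod n)) ^ ZMod.val (Multiplicative.toAdd x) := by
    rw [← ofAdd_nsmul]
    have h2 : ((ZMod.val (Multiplicative.toAdd x) : ℕ) : ZMod n) = Multiplicative.toAdd x :=
      ZMod.natCast_rightInverse _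
    rw [nsmul_eq_mul, mul_one, h2]
    rfl
  rw [hx, map_pow, map_pow, h]

variable (k p : ℕ)

abbrev Nn : ℕ := 2 ^ k * p
abbrev cn : ℕ := 2 ^ (k - 1) * p
abbrev dn : ℕ := 2 ^ (k - 2) * p

def cZ : ZMod (Nn k p) := (cn k p : ZMod (Nn k p))
def tZ : ZMod (Nn k p) := cZ k p - 1

lemma two_c (hk : 2 ≤ k) : 2 * cn k p = Nn k p := by
  obtain ⟨k', rfl⟩ : ∃ k', k = k' + 2 := ⟨k - 2, by omega⟩
  show 2 * (2 ^ (k' + 2 - 1) * p) = 2 ^ (k' + 2) * p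
  have h : k' + 2 - 1 = k' + 1 := rfl
  rw [h]; ring

lemma two_d (hk : 2 ≤ k) : 2 * dn k p = cn k p := by
  obtain ⟨k', rfl⟩ : ∃ k', k = k' + 2 := ⟨k - 2, by omega⟩
  show 2 * (2 ^ (k' + 2 - 2) * p) = 2 ^ (k' + 2 - 1) * p
  have h1 : k' + 2 - 1 = k' + 1 := rfl
  have h2 : k' + 2 - 2 = k' := rfl
  rw [h1, h2]; ring

lemma Npos (hp : 0 < p) : 0 < Nn k p := Nat.mul_pos (Nat.pow_pos (by norm_num)) hp

lemma dpos (hp : 0 < p) : 0 < dn k p := Nat.mul_pos (Nat.pow_pos (by norm_num)) hp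

lemma cpos (hp : 0 < p) : 0 < cn k p := Nat.mul_pos (Nat.pow_pos (by norm_num)) hp

lemma c_lt_N (hk : 2 ≤ k) (hp : 0 < p) : cn k p < Nn k p := by
  have h1 := two_c k p hk; have h2 := cpos k p hp; omega

lemma cZ_add_cZ (hk : 2 ≤ k) : cZ k p + cZ k p = 0 := by
  have h : ((2 * cn k p : ℕ) : ZMod (Nn k p)) = 0 := by
    rw [two_c k p hk]; exact ZMod.natCast_self _
  rwa [Nat.cast_mul, Nat.cast_two, two_mul] at h

lemma cZ_sq (hk : 2 ≤ k) : cZ k p * cZ k p = 0 := by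
  have hnat : cn k p * cn k p = dn k p * Nn k p := by
    obtain ⟨k', rfl⟩ : ∃ k', k = k' + 2 := ⟨k - 2, by omega⟩
    show 2 ^ (k' + 2 - 1) * p * (2 ^ (k' + 2 - 1) * p) = 2 ^ (k' + 2 - 2) * p * (2 ^ (k' + 2) * p)
    have h1 : k' + 2 - 1 = k' + 1 := rfl
    have h2 : k' + 2 - 2 = k' := rfl
    rw [h1, h2]; ring
  show ((cn k p : ℕ) : ZMod (Nn k p)) * ((cn k p : ℕ) : ZMod (Nn k p)) = 0
  rw [← Nat.cast_mul, hnat, Nat.cast_mul, ZMod.natCast_self, mul_zero]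

lemma tZ_sq (hk : 2 ≤ k) : tZ k p * tZ k p = 1 := by
  have h1 := cZ_sq k p hk
  have h2 := cZ_add_cZ k p hk
  have h : tZ k p * tZ k p = cZ k p * cZ k p - (cZ k p + cZ k p) + 1 := by
    unfold tZ; ring
  rw [h, h1, h2, sub_zero, zero_add]

lemma one_add_tZ : 1 + tZ k p = cZ k p := by unfold tZ; ring

-- the multiplication-by-t automorphism
def mulT (hk : 2 ≤ k) : ZMod (Nn k p) ≃+ ZMod (Nn k p) where
  toFun x := tZ k p * x
  invFun x := tZ k p * x
  left_inv x := by show tZ k p * (tZ k p * x) = x; rw [← mul_assoc, tZ_sq k p hk, one_mul]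
  right_inv x := by show tZ k p * (tZ k p * x) = x; rw [← mul_assoc, tZ_sq k p hk, one_mul]
  map_add' x y := mul_add _ x y

def autT (hk : 2 ≤ k) : MulAut (Multiplicative (ZMod (Nn k p))) :=
  AddEquiv.toMultiplicative (mulT k p hk)

lemma autT_apply (hk : 2 ≤ k) (x : Multiplicative (ZMod (Nn k p))) :
    autT k p hk x = Multiplicative.ofAdd (tZ k p * Multiplicative.toAdd x) := rfl

lemma autT_sq (hk : 2 ≤ k) : autT k p hk * autT k p hk = 1 := by
  ext x
  show autT k p hk (autT k p hk x) = x
  rw [autT_apply, autT_apply, toAdd_ofAdd, ← mul_assoc, tZ_sq k p hk, one_mul]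
  rfl

def phi (hk : 2 ≤ k) : Multiplicative (ZMod 2) →* MulAut (Multiplicative (ZMod (Nn k p))) :=
  AddMonoidHom.toMultiplicativeLeft
    (ZMod.lift 2 ⟨zmultiplesHom _ (Additive.ofMul (autT k p hk)), by
      show (2 : ℤ) • Additive.ofMul (autT k p hk) = 0
      rw [two_zsmul, ← ofMul_mul, autT_sq k p hk]
      rfl⟩)

lemma phi_apply_one (hk : 2 ≤ k) :
    phi k p hk (Multiplicative.ofAdd (1 : ZMod 2)) = autT k p hk := by
  unfold phi
  simp only [AddMonoidHom.coe_toMultiplicativeLeft, Function.comp_apply, toAdd_ofAdd]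
  have h : (1 : ZMod 2) = ((1 : ℤ) : ZMod 2) := by decide
  rw [h, ZMod.lift_coe]
  show Additive.toMul ((1 : ℤ) • Additive.ofMul (autT k p hk)) = _
  rw [one_zsmul]
  rfl

abbrev Mgp (hk : 2 ≤ k) :=
  SemidirectProduct (Multiplicative (ZMod (Nn k p))) (Multiplicative (ZMod 2)) (phi k p hk)

-- chunk 2 (appended to c1 content within namespace PG)
section Iso
variable (k p : ℕ)

lemma mk_rel_one {x : FreeGroup Gen} (h : x ∈ grpRels k p) :
    PresentedGroup.mk (grpRels k p) x = 1 :=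
  (QuotientGroup.eq_one_iff _).mpr (Subgroup.subset_normalClosure h)

lemma rG_pow_N : rG k p ^ (Nn k p) = 1 := by
  have h := mk_rel_one k p (x := FreeGroup.of Gen.r ^ (2 ^ k * p)) (Set.mem_insert _ _)
  rwa [map_pow] at h

lemma sG_sq : sG k p ^ 2 = 1 := by
  have h := mk_rel_one k p (x := FreeGroup.of Gen.s ^ 2)
    (Set.mem_insert_of_mem _ (Set.mem_insert _ _))
  rwa [map_pow] at h

lemma conj_rel : sG k p * rG k p * (sG k p)⁻¹ = rG k p ^ (cn k p - 1) := by
  have h := mk_rel_one k p (x := FreeGroup.of Gen.s * FreeGroup.of Gen.r *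
      (FreeGroup.of Gen.s)⁻¹ * (FreeGroup.of Gen.r ^ (2 ^ (k - 1) * p - 1))⁻¹)
    (Set.mem_insert_of_mem _ (Set.mem_insert_of_mem _ rfl))
  rw [map_mul, map_mul, map_mul, map_inv, map_inv, map_pow] at h
  exact mul_inv_eq_one.mp h

def fGen (hk : 2 ≤ k) : Gen → Mgp k p hk
  | Gen.r => SemidirectProduct.inl (Multiplicative.ofAdd (1 : ZMod (Nn k p)))
  | Gen.s => SemidirectProduct.inr (Multiplicative.ofAdd (1 : ZMod 2))

lemma ofAdd_one_pow_N : (Multiplicative.ofAdd (1 : ZMod (Nn k p))) ^ (Nn k p) = 1 := by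
  rw [← ofAdd_nsmul, nsmul_eq_mul, mul_one, ZMod.natCast_self]
  rfl

lemma ofAdd_one_pow_nat (m : ℕ) :
    (Multiplicative.ofAdd (1 : ZMod (Nn k p))) ^ m = Multiplicative.ofAdd ((m : ZMod (Nn k p))) := by
  rw [← ofAdd_nsmul, nsmul_eq_mul, mul_one]

lemma g1_sq : (Multiplicative.ofAdd (1 : ZMod 2)) ^ 2 = 1 := by
  rw [pow_two, ← ofAdd_add]
  have h : (1 : ZMod 2) + 1 = 0 := by decide
  rw [h]
  rfl

lemma tZ_natCast (hp : 0 < p) : tZ k p = ((cn k p - 1 : ℕ) : ZMod (Nn k p)) := by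
  rw [Nat.cast_sub (cpos k p hp), Nat.cast_one]
  rfl

lemma hrels (hk : 2 ≤ k) (hp : 0 < p) : ∀ x ∈ grpRels k p, FreeGroup.lift (fGen k p hk) x = 1 := by
  intro x hx
  rcases hx with h | h | h
  · subst h
    rw [map_pow, FreeGroup.lift_apply_of]
    show (SemidirectProduct.inl (Multiplicative.ofAdd (1 : ZMod (Nn k p)))) ^ (Nn k p) = 1
    rw [← map_pow, ofAdd_one_pow_N, map_one]
  · subst h
    rw [map_pow, FreeGroup.lift_apply_of]
    show (SemidirectProduct.inr (φ := phi k p hk) (Multiplicative.ofAdd (1 : ZMod 2))) ^ 2 = 1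
    rw [← map_pow, g1_sq, map_one]
  · rw [Set.mem_singleton_iff] at h
    subst h
    rw [map_mul, map_mul, map_mul, map_inv, map_inv, map_pow, FreeGroup.lift_apply_of,
      FreeGroup.lift_apply_of]
    show SemidirectProduct.inr (φ := phi k p hk) (Multiplicative.ofAdd (1 : ZMod 2)) *
        SemidirectProduct.inl (Multiplicative.ofAdd (1 : ZMod (Nn k p))) *
        (SemidirectProduct.inr (Multiplicative.ofAdd (1 : ZMod 2)))⁻¹ *
        ((SemidirectProduct.inl (Multiplicative.ofAdd (1 : ZMod (Nn k p)))) ^ (2 ^ (k-1) * p - 1))⁻¹ = 1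
    rw [← map_inv (SemidirectProduct.inr), ← SemidirectProduct.inl_aut]
    rw [← map_pow, ofAdd_one_pow_nat, ← tZ_natCast k p hp]
    rw [phi_apply_one, autT_apply, toAdd_ofAdd, mul_one, ← map_inv, ← map_mul,
      mul_inv_cancel, map_one]

def Fhom (hk : 2 ≤ k) (hp : 0 < p) : GKP k p →* Mgp k p hk := PresentedGroup.toGroup (hrels k p hk hp)

lemma Fhom_r (hk : 2 ≤ k) (hp : 0 < p) : Fhom k p hk hp (rG k p) =
    SemidirectProduct.inl (Multiplicative.ofAdd (1 : ZMod (Nn k p))) :=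
  PresentedGroup.toGroup.of _

lemma Fhom_s (hk : 2 ≤ k) (hp : 0 < p) : Fhom k p hk hp (sG k p) =
    SemidirectProduct.inr (Multiplicative.ofAdd (1 : ZMod 2)) :=
  PresentedGroup.toGroup.of _

def f1 : Multiplicative (ZMod (Nn k p)) →* GKP k p :=
  AddMonoidHom.toMultiplicativeLeft
    (ZMod.lift _ ⟨zmultiplesHom _ (Additive.ofMul (rG k p)), by
      show ((Nn k p : ℤ)) • Additive.ofMul (rG k p) = 0
      rw [natCast_zsmul, ← ofMul_pow, rG_pow_N]
      rfl⟩)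

def f2 : Multiplicative (ZMod 2) →* GKP k p :=
  AddMonoidHom.toMultiplicativeLeft
    (ZMod.lift _ ⟨zmultiplesHom _ (Additive.ofMul (sG k p)), by
      show ((2 : ℕ) : ℤ) • Additive.ofMul (sG k p) = 0
      rw [natCast_zsmul, ← ofMul_pow, sG_sq]
      rfl⟩)

lemma f1_natCast (m : ℕ) :
    f1 k p (Multiplicative.ofAdd ((m : ZMod (Nn k p)))) = rG k p ^ m := by
  unfold f1
  simp only [AddMonoidHom.coe_toMultiplicativeLeft, Function.comp_apply, toAdd_ofAdd]
  have h : ((m : ℕ) : ZMod (Nn k p)) = ((m : ℤ) : ZMod (Nn k p)) := by push_cast; ring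
  rw [h, ZMod.lift_coe]
  show Additive.toMul (((m : ℤ)) • Additive.ofMul (rG k p)) = _
  rw [natCast_zsmul, ← ofMul_pow]
  rfl

lemma f1_one : f1 k p (Multiplicative.ofAdd (1 : ZMod (Nn k p))) = rG k p := by
  have h := f1_natCast k p 1
  rw [Nat.cast_one] at h
  rw [h, pow_one]

lemma f2_one : f2 k p (Multiplicative.ofAdd (1 : ZMod 2)) = sG k p := by
  unfold f2
  simp only [AddMonoidHom.coe_toMultiplicativeLeft, Function.comp_apply, toAdd_ofAdd]
  have h : (1 : ZMod 2) = ((1 : ℤ) : ZMod 2) := by decide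
  rw [h, ZMod.lift_coe]
  show Additive.toMul (((1 : ℤ)) • Additive.ofMul (sG k p)) = _
  rw [one_zsmul]
  rfl

lemma zmod2_cases (y : Multiplicative (ZMod 2)) :
    y = 1 ∨ y = Multiplicative.ofAdd (1 : ZMod 2) := by
  have h : ∀ z : ZMod 2, z = 0 ∨ z = 1 := by decide
  rcases h (Multiplicative.toAdd y) with h2 | h2
  · left
    have : y = Multiplicative.ofAdd (Multiplicative.toAdd y) := rfl
    rw [this, h2]; rfl
  · right
    have : y = Multiplicative.ofAdd (Multiplicative.toAdd y) := rfl
    rw [this, h2]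

lemma hcomp (hk : 2 ≤ k) (hp : 0 < p) : ∀ g, (f1 k p).comp ((phi k p hk) g).toMonoidHom =
    (MulAut.conj ((f2 k p) g)).toMonoidHom.comp (f1 k p) := by
  intro g
  rcases zmod2_cases g with h | h <;> subst h
  · haveI : NeZero (Nn k p) := ⟨(Npos k p hp).ne'⟩
    apply multHom_ext
    simp only [map_one, MonoidHom.comp_apply, MonoidHom.coe_comp, Function.comp_apply,
      MulEquiv.coe_toMonoidHom, MulAut.one_apply, MulAut.conj_apply, f2_one]
  · haveI : NeZero (Nn k p) := ⟨(Npos k p hp).ne'⟩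
    apply multHom_ext
    simp only [MonoidHom.comp_apply, MonoidHom.coe_comp, Function.comp_apply,
      MulEquiv.coe_toMonoidHom, phi_apply_one, autT_apply, toAdd_ofAdd, mul_one,
      MulAut.conj_apply, f1_one, f2_one]
    rw [tZ_natCast k p hp, f1_natCast, ← conj_rel]

end Iso
section Iso2
variable (k p : ℕ)

def Ghom (hk : 2 ≤ k) (hp : 0 < p) : Mgp k p hk →* GKP k p :=
  SemidirectProduct.lift (f1 k p) (f2 k p) (hcomp k p hk hp)

lemma GF_comp (hk : 2 ≤ k) (hp : 0 < p) :
    (Ghom k p hk hp).comp (Fhom k p hk hp) = MonoidHom.id (GKP k p) := by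
  apply PresentedGroup.ext
  intro x
  cases x with
  | r =>
    show Ghom k p hk hp (Fhom k p hk hp (rG k p)) = rG k p
    rw [Fhom_r, Ghom, SemidirectProduct.lift_inl, f1_one]
  | s =>
    show Ghom k p hk hp (Fhom k p hk hp (sG k p)) = sG k p
    rw [Fhom_s, Ghom, SemidirectProduct.lift_inr, f2_one]

lemma FG_comp (hk : 2 ≤ k) (hp : 0 < p) :
    (Fhom k p hk hp).comp (Ghom k p hk hp) = MonoidHom.id (Mgp k p hk) := by
  haveI : NeZero (Nn k p) := ⟨(Npos k p hp).ne'⟩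
  apply SemidirectProduct.hom_ext
  · rw [MonoidHom.comp_assoc]
    apply multHom_ext
    simp only [MonoidHom.comp_apply, MonoidHom.id_comp]
    rw [Ghom, SemidirectProduct.lift_inl, f1_one, Fhom_r]
  · rw [MonoidHom.comp_assoc]
    apply multHom_ext
    simp only [MonoidHom.comp_apply, MonoidHom.id_comp]
    rw [Ghom, SemidirectProduct.lift_inr, f2_one, Fhom_s]

def isoGM (hk : 2 ≤ k) (hp : 0 < p) : GKP k p ≃* Mgp k p hk :=
  MonoidHom.toMulEquiv (Fhom k p hk hp) (Ghom k p hk hp) (GF_comp k p hk hp) (FG_comp k p hk hp)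

end Iso2

/-- transport of power graphs along a group isomorphism -/
def powerGraphIso {A B : Type*} [Group A] [Group B] (e : A ≃* B) :
    powerGraph A ≃g powerGraph B where
  toEquiv := e.toEquiv
  map_rel_iff' := by
    intro a b
    show (powerGraph B).Adj (e a) (e b) ↔ (powerGraph A).Adj a b
    have hpow : ∀ (u v : A), (∃ m : ℕ, 0 < m ∧ e v = e u ^ m) ↔ ∃ m : ℕ, 0 < m ∧ v = u ^ m := by
      intro u v
      constructor
      · rintro ⟨m, hm, h⟩
        exact ⟨m, hm, e.injective (by rw [map_pow]; exact h)⟩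
      · rintro ⟨m, hm, rfl⟩
        exact ⟨m, hm, by rw [map_pow]⟩
    show (e a ≠ e b ∧ _) ↔ (a ≠ b ∧ _)
    rw [ne_eq, EmbeddingLike.apply_eq_iff_eq, hpow, hpow]
section Powers
variable (k p : ℕ)

/-- shorthand: y is a positive power of x -/
def Pw {G : Type*} [Group G] (x y : G) : Prop := ∃ m : ℕ, 0 < m ∧ y = x ^ m

lemma powerGraph_adj {G : Type*} [Group G] (x y : G) :
    (powerGraph G).Adj x y ↔ x ≠ y ∧ (Pw x y ∨ Pw y x) := Iff.rfl

lemma g1_ne_one : (Multiplicative.ofAdd (1 : ZMod 2)) ≠ 1 := by decide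

def uu (hk : 2 ≤ k) : Mgp k p hk := SemidirectProduct.inl (Multiplicative.ofAdd (cZ k p))

lemma uu_right (hk : 2 ≤ k) : (uu k p hk).right = 1 := rfl

lemma right_pow (hk : 2 ≤ k) (x : Mgp k p hk) (m : ℕ) : (x ^ m).right = x.right ^ m := by
  have h := map_pow (SemidirectProduct.rightHom) x m
  simpa using h

lemma eq_inl_of_right_one (hk : 2 ≤ k) (x : Mgp k p hk) (h : x.right = 1) :
    x = SemidirectProduct.inl x.left := by
  ext
  · rfl
  · exact h

lemma cmul_even (hk : 2 ≤ k) (hp : 0 < p) (a : ZMod (Nn k p))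
    (h : Even (haveI : NeZero (Nn k p) := ⟨(Npos k p hp).ne'⟩; a.val)) :
    cZ k p * a = 0 := by
  haveI : NeZero (Nn k p) := ⟨(Npos k p hp).ne'⟩
  obtain ⟨j, hj⟩ := h
  have ha : ((a.val : ℕ) : ZMod (Nn k p)) = a := ZMod.natCast_rightInverse a
  rw [← ha, cZ, ← Nat.cast_mul, hj]
  have hnat : cn k p * (j + j) = Nn k p * j := by
    have := two_c k p hk; nlinarith [this]
  rw [hnat, Nat.cast_mul, ZMod.natCast_self, zero_mul]

lemma cmul_odd (hk : 2 ≤ k) (hp : 0 < p) (a : ZMod (Nn k p))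
    (h : ¬ Even (haveI : NeZero (Nn k p) := ⟨(Npos k p hp).ne'⟩; a.val)) :
    cZ k p * a = cZ k p := by
  haveI : NeZero (Nn k p) := ⟨(Npos k p hp).ne'⟩
  rw [Nat.not_even_iff_odd] at h
  obtain ⟨j, hj⟩ := h
  have ha : ((a.val : ℕ) : ZMod (Nn k p)) = a := ZMod.natCast_rightInverse a
  rw [← ha, cZ, ← Nat.cast_mul, hj]
  have hnat : cn k p * (2 * j + 1) = Nn k p * j + cn k p := by
    have := two_c k p hk; nlinarith [this]
  rw [hnat, Nat.cast_add, Nat.cast_mul, ZMod.natCast_self, zero_mul, zero_add]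

lemma sq_g1 (hk : 2 ≤ k) (x : Mgp k p hk) (hx : x.right = Multiplicative.ofAdd (1 : ZMod 2)) :
    x * x = SemidirectProduct.inl
      (Multiplicative.ofAdd (cZ k p * Multiplicative.toAdd x.left)) := by
  ext
  · show x.left * (phi k p hk x.right) x.left = _
    rw [hx, phi_apply_one, autT_apply]
    show Multiplicative.ofAdd (Multiplicative.toAdd x.left + tZ k p * Multiplicative.toAdd x.left) = _
    congr 1
    have h := one_add_tZ k p
    calc Multiplicative.toAdd x.left + tZ k p * Multiplicative.toAdd x.left
        = (1 + tZ k p) * Multiplicative.toAdd x.left := by ring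
      _ = cZ k p * Multiplicative.toAdd x.left := by rw [h]
  · show x.right * x.right = 1
    rw [hx]
    have h2 : (Multiplicative.ofAdd (1 : ZMod 2)) * (Multiplicative.ofAdd (1 : ZMod 2)) = 1 := by
      decide
    exact h2

lemma uu_mul_uu (hk : 2 ≤ k) : uu k p hk * uu k p hk = 1 := by
  rw [uu, ← map_mul, ← ofAdd_add, cZ_add_cZ k p hk]
  rfl

lemma sq_even (hk : 2 ≤ k) (hp : 0 < p) (x : Mgp k p hk)
    (hx : x.right = Multiplicative.ofAdd (1 : ZMod 2))
    (he : Even (haveI : NeZero (Nn k p) := ⟨(Npos k p hp).ne'⟩; (Multiplicative.toAdd x.left).val)) :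
    x * x = 1 := by
  rw [sq_g1 k p hk x hx, cmul_even k p hk hp _ he]
  rfl

lemma sq_odd (hk : 2 ≤ k) (hp : 0 < p) (x : Mgp k p hk)
    (hx : x.right = Multiplicative.ofAdd (1 : ZMod 2))
    (he : ¬ Even (haveI : NeZero (Nn k p) := ⟨(Npos k p hp).ne'⟩; (Multiplicative.toAdd x.left).val)) :
    x * x = uu k p hk := by
  rw [sq_g1 k p hk x hx, cmul_odd k p hk hp _ he]
  rfl

lemma pow_even (hk : 2 ≤ k) (hp : 0 < p) (x : Mgp k p hk)
    (hx : x.right = Multiplicative.ofAdd (1 : ZMod 2))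
    (he : Even (haveI : NeZero (Nn k p) := ⟨(Npos k p hp).ne'⟩; (Multiplicative.toAdd x.left).val))
    (m : ℕ) : x ^ m = 1 ∨ x ^ m = x := by
  have h2 : x ^ 2 = 1 := by rw [pow_two]; exact sq_even k p hk hp x hx he
  rcases Nat.even_or_odd m with ⟨q, rfl⟩ | ⟨q, rfl⟩
  · left; rw [← two_mul, pow_mul, h2, one_pow]
  · right; rw [pow_add, pow_mul, h2, one_pow, pow_one, one_mul]

lemma pow_odd (hk : 2 ≤ k) (hp : 0 < p) (x : Mgp k p hk)
    (hx : x.right = Multiplicative.ofAdd (1 : ZMod 2))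
    (he : ¬ Even (haveI : NeZero (Nn k p) := ⟨(Npos k p hp).ne'⟩; (Multiplicative.toAdd x.left).val))
    (m : ℕ) : x ^ m = 1 ∨ x ^ m = x ∨ x ^ m = uu k p hk ∨ x ^ m = uu k p hk * x := by
  have h2 : x ^ 2 = uu k p hk := by rw [pow_two]; exact sq_odd k p hk hp x hx he
  have h4 : uu k p hk ^ 2 = 1 := by rw [pow_two]; exact uu_mul_uu k p hk
  have hu : ∀ q : ℕ, uu k p hk ^ q = 1 ∨ uu k p hk ^ q = uu k p hk := by
    intro q
    rcases Nat.even_or_odd q with ⟨r, rfl⟩ | ⟨r, rfl⟩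
    · left; rw [← two_mul, pow_mul, h4, one_pow]
    · right; rw [pow_add, pow_mul, h4, one_pow, pow_one, one_mul]
  rcases Nat.even_or_odd m with ⟨q, rfl⟩ | ⟨q, rfl⟩
  · have : x ^ (q + q) = uu k p hk ^ q := by rw [← two_mul, pow_mul, h2]
    rcases hu q with h | h
    · left; rw [this, h]
    · right; right; left; rw [this, h]
  · have : x ^ (2 * q + 1) = uu k p hk ^ q * x := by rw [pow_add, pow_mul, h2, pow_one]
    rcases hu q with h | h
    · right; left; rw [this, h, one_mul]
    · right; right; right; rw [this, h]

lemma Pw_inl_iff (hk : 2 ≤ k) (a b : Multiplicative (ZMod (Nn k p))) :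
    Pw (SemidirectProduct.inl a : Mgp k p hk) (SemidirectProduct.inl b) ↔
      ∃ m : ℕ, 0 < m ∧ b = a ^ m := by
  constructor
  · rintro ⟨m, hm, h⟩
    rw [← map_pow] at h
    exact ⟨m, hm, SemidirectProduct.inl_injective h⟩
  · rintro ⟨m, hm, rfl⟩
    exact ⟨m, hm, by rw [map_pow]⟩

lemma not_Pw_inl_g1 (hk : 2 ≤ k) (x y : Mgp k p hk) (hx : x.right = 1) (hy : y.right ≠ 1) :
    ¬ Pw x y := by
  rintro ⟨m, hm, rfl⟩
  apply hy
  rw [right_pow, hx, one_pow]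

lemma Pw_even_iff (hk : 2 ≤ k) (hp : 0 < p) (x y : Mgp k p hk)
    (hx : x.right = Multiplicative.ofAdd (1 : ZMod 2))
    (he : Even (haveI : NeZero (Nn k p) := ⟨(Npos k p hp).ne'⟩; (Multiplicative.toAdd x.left).val)) :
    Pw x y ↔ y = 1 ∨ y = x := by
  constructor
  · rintro ⟨m, hm, rfl⟩
    exact pow_even k p hk hp x hx he m
  · rintro (h | h) <;> rw [h]
    · exact ⟨2, by norm_num, by rw [pow_two, sq_even k p hk hp x hx he]⟩
    · exact ⟨1, by norm_num, (pow_one x).symm⟩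

lemma Pw_odd_iff (hk : 2 ≤ k) (hp : 0 < p) (x y : Mgp k p hk)
    (hx : x.right = Multiplicative.ofAdd (1 : ZMod 2))
    (he : ¬ Even (haveI : NeZero (Nn k p) := ⟨(Npos k p hp).ne'⟩; (Multiplicative.toAdd x.left).val)) :
    Pw x y ↔ y = 1 ∨ y = x ∨ y = uu k p hk ∨ y = uu k p hk * x := by
  constructor
  · rintro ⟨m, hm, rfl⟩
    exact pow_odd k p hk hp x hx he m
  · have h2 : x ^ 2 = uu k p hk := by rw [pow_two]; exact sq_odd k p hk hp x hx he
    rintro (h | h | h | h) <;> rw [h]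
    · refine ⟨4, by norm_num, ?_⟩
      have h4 : x ^ 4 = (x ^ 2) ^ 2 := by rw [← pow_mul]
      rw [h4, h2, pow_two, uu_mul_uu]
    · exact ⟨1, by norm_num, (pow_one x).symm⟩
    · exact ⟨2, by norm_num, h2.symm⟩
    · refine ⟨3, by norm_num, ?_⟩
      rw [pow_succ, h2]

end Powers
section ModelEquiv
variable (k p : ℕ)

def toModelF (hk : 2 ≤ k) (hp : 0 < p) (x : Mgp k p hk) : ModelV k p :=
  if x.right = 1 then Sum.inl x.left
  else if Even (Multiplicative.toAdd x.left).val then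
    Sum.inr (Sum.inl ⟨(Multiplicative.toAdd x.left).val / 2, by
      haveI : NeZero (Nn k p) := ⟨(Npos k p hp).ne'⟩
      have h1 : (Multiplicative.toAdd x.left).val < Nn k p := ZMod.val_lt _
      have h2 := two_c k p hk
      have e1 : cn k p = 2 ^ (k-1) * p := rfl
      have e3 : Nn k p = 2 ^ k * p := rfl
      omega⟩)
  else
    Sum.inr (Sum.inr (⟨(Multiplicative.toAdd x.left).val / 2 % dn k p,
        Nat.mod_lt _ (dpos k p hp)⟩,
      ⟨(Multiplicative.toAdd x.left).val / 2 / dn k p, by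
        haveI : NeZero (Nn k p) := ⟨(Npos k p hp).ne'⟩
        have h1 : (Multiplicative.toAdd x.left).val < Nn k p := ZMod.val_lt _
        have h2 := two_c k p hk
        have h3 := two_d k p hk
        have e1 : cn k p = 2 ^ (k-1) * p := rfl
        have e2 : dn k p = 2 ^ (k-2) * p := rfl
        have e3 : Nn k p = 2 ^ k * p := rfl
        exact Nat.div_lt_of_lt_mul (by omega)⟩))

def fromModelF (hk : 2 ≤ k) : ModelV k p → Mgp k p hk
  | Sum.inl a => SemidirectProduct.inl a
  | Sum.inr (Sum.inl i) =>
      ⟨Multiplicative.ofAdd ((2 * i.val : ℕ) : ZMod (Nn k p)), Multiplicative.ofAdd 1⟩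
  | Sum.inr (Sum.inr je) =>
      ⟨Multiplicative.ofAdd ((2 * (je.1.val + je.2.val * dn k p) + 1 : ℕ) : ZMod (Nn k p)),
        Multiplicative.ofAdd 1⟩

lemma left_inv_FM (hk : 2 ≤ k) (hp : 0 < p) (x : Mgp k p hk) :
    fromModelF k p hk (toModelF k p hk hp x) = x := by
  haveI : NeZero (Nn k p) := ⟨(Npos k p hp).ne'⟩
  by_cases hr : x.right = 1
  · rw [toModelF, if_pos hr]
    show SemidirectProduct.inl x.left = x
    exact (eq_inl_of_right_one k p hk x hr).symm
  · have hg : x.right = Multiplicative.ofAdd (1 : ZMod 2) :=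
      (zmod2_cases x.right).resolve_left hr
    rw [toModelF, if_neg hr]
    set v := (Multiplicative.toAdd x.left).val with hv
    have hvc : ((v : ℕ) : ZMod (Nn k p)) = Multiplicative.toAdd x.left :=
      ZMod.natCast_rightInverse _
    by_cases he : Even v
    · rw [if_pos he]
      show (⟨Multiplicative.ofAdd ((2 * (v / 2) : ℕ) : ZMod (Nn k p)),
        Multiplicative.ofAdd 1⟩ : Mgp k p hk) = x
      have h2 : 2 * (v / 2) = v := by
        obtain ⟨j, hj⟩ := he; omega
      ext
      · show Multiplicative.ofAdd ((2 * (v / 2) : ℕ) : ZMod (Nn k p)) = x.left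
        rw [h2, hvc]
        rfl
      · exact hg.symm
    · rw [if_neg he]
      show (⟨Multiplicative.ofAdd ((2 * (v / 2 % dn k p + v / 2 / dn k p * dn k p) + 1 : ℕ) :
        ZMod (Nn k p)), Multiplicative.ofAdd 1⟩ : Mgp k p hk) = x
      have h2 : v / 2 % dn k p + v / 2 / dn k p * dn k p = v / 2 := Nat.mod_add_div' _ _
      have h3 : 2 * (v / 2) + 1 = v := by
        rw [Nat.not_even_iff_odd] at he; obtain ⟨j, hj⟩ := he; omega
      ext
      · show Multiplicative.ofAdd ((2 * (v / 2 % dn k p + v / 2 / dn k p * dn k p) + 1 : ℕ) :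
          ZMod (Nn k p)) = x.left
        rw [h2, h3, hvc]
        rfl
      · exact hg.symm

lemma right_inv_FM (hk : 2 ≤ k) (hp : 0 < p) (y : ModelV k p) :
    toModelF k p hk hp (fromModelF k p hk y) = y := by
  haveI : NeZero (Nn k p) := ⟨(Npos k p hp).ne'⟩
  have h2c := two_c k p hk
  have h2d := two_d k p hk
  have hdp := dpos k p hp
  have e1 : cn k p = 2 ^ (k-1) * p := rfl
  have e2 : dn k p = 2 ^ (k-2) * p := rfl
  have e3 : Nn k p = 2 ^ k * p := rfl
  match y with
  | Sum.inl a =>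
    rw [fromModelF, toModelF, if_pos (SemidirectProduct.right_inl a)]
    rfl
  | Sum.inr (Sum.inl i) =>
    have hlt : 2 * i.val < Nn k p := by have := i.isLt; omega
    have hv : (Multiplicative.toAdd (Multiplicative.ofAdd ((2 * i.val : ℕ) : ZMod (Nn k p)))).val
        = 2 * i.val := ZMod.val_cast_of_lt hlt
    rw [fromModelF, toModelF, if_neg (by exact g1_ne_one)]
    rw [if_pos (by rw [hv]; exact ⟨i.val, by omega⟩)]
    refine congrArg Sum.inr (congrArg Sum.inl (Fin.ext ?_))
    show (Multiplicative.toAdd (Multiplicative.ofAdd ((2 * i.val : ℕ) : ZMod (Nn k p)))).val / 2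
      = i.val
    rw [hv]
    omega
  | Sum.inr (Sum.inr je) =>
    obtain ⟨j1, e1'⟩ := je
    have hj := j1.isLt
    have hev := e1'.isLt
    have hmul : e1'.val * dn k p ≤ 1 * dn k p := Nat.mul_le_mul_right _ (by omega)
    have hlt : 2 * (j1.val + e1'.val * dn k p) + 1 < Nn k p := by
      have e2' : dn k p = 2 ^ (k - 2) * p := rfl
      omega
    have hv : (Multiplicative.toAdd (Multiplicative.ofAdd
        ((2 * (j1.val + e1'.val * dn k p) + 1 : ℕ) : ZMod (Nn k p)))).val
        = 2 * (j1.val + e1'.val * dn k p) + 1 := ZMod.val_cast_of_lt hlt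
    rw [fromModelF, toModelF, if_neg (by exact g1_ne_one)]
    rw [if_neg (by rw [hv]; intro h; obtain ⟨j, hj2⟩ := h; omega)]
    have hdiv : (2 * (j1.val + e1'.val * dn k p) + 1) / 2 = j1.val + e1'.val * dn k p := by
      omega
    refine congrArg Sum.inr (congrArg Sum.inr ?_)
    rw [Prod.mk.injEq]
    constructor
    · apply Fin.ext
      show (Multiplicative.toAdd (Multiplicative.ofAdd
          ((2 * (j1.val + e1'.val * dn k p) + 1 : ℕ) : ZMod (Nn k p)))).val / 2 % dn k p = j1.val
      rw [hv, hdiv, Nat.add_mul_mod_self_right, Nat.mod_eq_of_lt hj]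
    · apply Fin.ext
      show (Multiplicative.toAdd (Multiplicative.ofAdd
          ((2 * (j1.val + e1'.val * dn k p) + 1 : ℕ) : ZMod (Nn k p)))).val / 2 / dn k p = e1'.val
      rw [hv, hdiv, Nat.add_mul_div_right _ _ hdp, Nat.div_eq_of_lt hj, zero_add]

def modelEquiv (hk : 2 ≤ k) (hp : 0 < p) : Mgp k p hk ≃ ModelV k p :=
  ⟨toModelF k p hk hp, fromModelF k p hk, left_inv_FM k p hk hp, right_inv_FM k p hk hp⟩

end ModelEquiv
section AdjChar
variable (k p : ℕ)

lemma mod_two_cases {a n : ℕ} (h : a < 2 * n) :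
    (a < n ∧ a % n = a) ∨ (n ≤ a ∧ a % n = a - n) := by
  rcases Nat.lt_or_ge a n with h1 | h1
  · exact Or.inl ⟨h1, Nat.mod_eq_of_lt h1⟩
  · exact Or.inr ⟨h1, by rw [Nat.mod_eq_sub_mod h1, Nat.mod_eq_of_lt (by omega)]⟩

lemma uu_mul_left (hk : 2 ≤ k) (x : Mgp k p hk) :
    (uu k p hk * x).left = Multiplicative.ofAdd (cZ k p + Multiplicative.toAdd x.left) := by
  rw [SemidirectProduct.mul_left]
  show (uu k p hk).left * (phi k p hk (1 : Multiplicative (ZMod 2))) x.left = _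
  rw [map_one, MulAut.one_apply]
  rfl

lemma uu_mul_right (hk : 2 ≤ k) (x : Mgp k p hk) :
    (uu k p hk * x).right = x.right := by
  rw [SemidirectProduct.mul_right]
  exact one_mul _

lemma uu_mul_uu_mul (hk : 2 ≤ k) (x : Mgp k p hk) :
    uu k p hk * (uu k p hk * x) = x := by
  rw [← mul_assoc, uu_mul_uu, one_mul]

lemma cZ_val (hk : 2 ≤ k) (hp : 0 < p) :
    (haveI : NeZero (Nn k p) := ⟨(Npos k p hp).ne'⟩; (cZ k p).val) = cn k p := by
  haveI : NeZero (Nn k p) := ⟨(Npos k p hp).ne'⟩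
  exact ZMod.val_cast_of_lt (c_lt_N k p hk hp)

lemma uu_ne_one (hk : 2 ≤ k) (hp : 0 < p) : uu k p hk ≠ 1 := by
  haveI : NeZero (Nn k p) := ⟨(Npos k p hp).ne'⟩
  intro h
  rw [uu, ← map_one (SemidirectProduct.inl (φ := phi k p hk)), SemidirectProduct.inl_inj] at h
  have h2 : cZ k p = 0 := by
    have := congrArg Multiplicative.toAdd h
    simpa using this
  have h3 := cZ_val k p hk hp
  rw [h2, ZMod.val_zero] at h3
  have := cpos k p hp
  omega

lemma val_uu_mul_parity (hk : 2 ≤ k) (hp : 0 < p) (x : Mgp k p hk) :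
    (haveI : NeZero (Nn k p) := ⟨(Npos k p hp).ne'⟩;
      (Multiplicative.toAdd (uu k p hk * x).left).val % 2
        = (Multiplicative.toAdd x.left).val % 2) := by
  haveI : NeZero (Nn k p) := ⟨(Npos k p hp).ne'⟩
  rw [uu_mul_left, toAdd_ofAdd, ZMod.val_add, cZ_val k p hk hp]
  have h2c := two_c k p hk
  have h2d := two_d k p hk
  have hb : (Multiplicative.toAdd x.left).val < Nn k p := ZMod.val_lt _
  have hc := c_lt_N k p hk hp
  rcases mod_two_cases (a := cn k p + (Multiplicative.toAdd x.left).val) (n := Nn k p)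
    (by omega) with ⟨hlt, h⟩ | ⟨hge, h⟩ <;> rw [h] <;> omega

-- characterizations of power graph adjacency in Mgp
lemma adj_AA (hk : 2 ≤ k) (a b : Multiplicative (ZMod (Nn k p))) :
    (powerGraph (Mgp k p hk)).Adj (SemidirectProduct.inl a) (SemidirectProduct.inl b) ↔
      (powerGraph (Multiplicative (ZMod (Nn k p)))).Adj a b := by
  rw [powerGraph_adj, powerGraph_adj, Pw_inl_iff, Pw_inl_iff, ne_eq,
    SemidirectProduct.inl_inj]
  exact Iff.rfl

lemma adj_A_even (hk : 2 ≤ k) (hp : 0 < p) (x y : Mgp k p hk) (hx : x.right = 1)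
    (hy : y.right = Multiplicative.ofAdd (1 : ZMod 2))
    (he : Even (haveI : NeZero (Nn k p) := ⟨(Npos k p hp).ne'⟩;
      (Multiplicative.toAdd y.left).val)) :
    (powerGraph (Mgp k p hk)).Adj x y ↔ x = 1 := by
  have hyne : y.right ≠ 1 := by rw [hy]; exact g1_ne_one
  have hne : x ≠ y := by intro h; rw [h] at hx; exact hyne hx
  rw [powerGraph_adj]
  constructor
  · rintro ⟨-, h | h⟩
    · exact absurd h (not_Pw_inl_g1 k p hk x y hx hyne)
    · rcases (Pw_even_iff k p hk hp y x hy he).mp h with h1 | h1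
      · exact h1
      · exact absurd h1 hne
  · intro h
    exact ⟨hne, Or.inr ((Pw_even_iff k p hk hp y x hy he).mpr (Or.inl h))⟩

lemma adj_A_odd (hk : 2 ≤ k) (hp : 0 < p) (x y : Mgp k p hk) (hx : x.right = 1)
    (hy : y.right = Multiplicative.ofAdd (1 : ZMod 2))
    (he : ¬ Even (haveI : NeZero (Nn k p) := ⟨(Npos k p hp).ne'⟩;
      (Multiplicative.toAdd y.left).val)) :
    (powerGraph (Mgp k p hk)).Adj x y ↔ x = 1 ∨ x = uu k p hk := by
  have hyne : y.right ≠ 1 := by rw [hy]; exact g1_ne_one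
  have hne : x ≠ y := by intro h; rw [h] at hx; exact hyne hx
  have huy : (uu k p hk * y).right ≠ 1 := by rw [uu_mul_right, hy]; exact g1_ne_one
  rw [powerGraph_adj]
  constructor
  · rintro ⟨-, h | h⟩
    · exact absurd h (not_Pw_inl_g1 k p hk x y hx hyne)
    · rcases (Pw_odd_iff k p hk hp y x hy he).mp h with h1 | h1 | h1 | h1
      · exact Or.inl h1
      · exact absurd h1 hne
      · exact Or.inr h1
      · exact absurd (h1 ▸ hx) huy
  · intro h
    refine ⟨hne, Or.inr ((Pw_odd_iff k p hk hp y x hy he).mpr ?_)⟩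
    rcases h with h | h
    · exact Or.inl h
    · exact Or.inr (Or.inr (Or.inl h))

lemma adj_even_even (hk : 2 ≤ k) (hp : 0 < p) (x y : Mgp k p hk)
    (hx : x.right = Multiplicative.ofAdd (1 : ZMod 2))
    (hy : y.right = Multiplicative.ofAdd (1 : ZMod 2))
    (hex : Even (haveI : NeZero (Nn k p) := ⟨(Npos k p hp).ne'⟩;
      (Multiplicative.toAdd x.left).val))
    (hey : Even (haveI : NeZero (Nn k p) := ⟨(Npos k p hp).ne'⟩;
      (Multiplicative.toAdd y.left).val)) :
    ¬ (powerGraph (Mgp k p hk)).Adj x y := by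
  have hxne : x.right ≠ 1 := by rw [hx]; exact g1_ne_one
  have hyne : y.right ≠ 1 := by rw [hy]; exact g1_ne_one
  rintro ⟨hne, h | h⟩
  · rcases (Pw_even_iff k p hk hp x y hx hex).mp h with h1 | h1
    · rw [h1] at hyne; exact hyne rfl
    · exact hne h1.symm
  · rcases (Pw_even_iff k p hk hp y x hy hey).mp h with h1 | h1
    · rw [h1] at hxne; exact hxne rfl
    · exact hne h1

lemma adj_even_odd (hk : 2 ≤ k) (hp : 0 < p) (x y : Mgp k p hk)
    (hx : x.right = Multiplicative.ofAdd (1 : ZMod 2))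
    (hy : y.right = Multiplicative.ofAdd (1 : ZMod 2))
    (hex : Even (haveI : NeZero (Nn k p) := ⟨(Npos k p hp).ne'⟩;
      (Multiplicative.toAdd x.left).val))
    (hey : ¬ Even (haveI : NeZero (Nn k p) := ⟨(Npos k p hp).ne'⟩;
      (Multiplicative.toAdd y.left).val)) :
    ¬ (powerGraph (Mgp k p hk)).Adj x y := by
  haveI : NeZero (Nn k p) := ⟨(Npos k p hp).ne'⟩
  have hxne : x.right ≠ 1 := by rw [hx]; exact g1_ne_one
  have hyne : y.right ≠ 1 := by rw [hy]; exact g1_ne_one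
  have hpar : x ≠ y := by
    intro h
    rw [h] at hex; exact hey hex
  rintro ⟨hne, h | h⟩
  · rcases (Pw_even_iff k p hk hp x y hx hex).mp h with h1 | h1
    · rw [h1] at hyne; exact hyne rfl
    · exact hne h1.symm
  · rcases (Pw_odd_iff k p hk hp y x hy hey).mp h with h1 | h1 | h1 | h1
    · rw [h1] at hxne; exact hxne rfl
    · exact hne h1
    · rw [h1] at hxne; exact hxne (uu_right k p hk)
    · -- x = uu * y : parity contradiction
      have hp2 := val_uu_mul_parity k p hk hp y
      rw [← h1] at hp2
      rw [Nat.even_iff] at hex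
      rw [Nat.even_iff] at hey
      omega

lemma adj_odd_odd (hk : 2 ≤ k) (hp : 0 < p) (x y : Mgp k p hk)
    (hx : x.right = Multiplicative.ofAdd (1 : ZMod 2))
    (hy : y.right = Multiplicative.ofAdd (1 : ZMod 2))
    (hex : ¬ Even (haveI : NeZero (Nn k p) := ⟨(Npos k p hp).ne'⟩;
      (Multiplicative.toAdd x.left).val))
    (hey : ¬ Even (haveI : NeZero (Nn k p) := ⟨(Npos k p hp).ne'⟩;
      (Multiplicative.toAdd y.left).val)) :
    (powerGraph (Mgp k p hk)).Adj x y ↔ x ≠ y ∧ y = uu k p hk * x := by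
  have hxne : x.right ≠ 1 := by rw [hx]; exact g1_ne_one
  have hyne : y.right ≠ 1 := by rw [hy]; exact g1_ne_one
  rw [powerGraph_adj]
  constructor
  · rintro ⟨hne, h | h⟩
    · rcases (Pw_odd_iff k p hk hp x y hx hex).mp h with h1 | h1 | h1 | h1
      · rw [h1] at hyne; exact absurd rfl hyne
      · exact absurd h1.symm hne
      · rw [h1] at hyne; exact absurd (uu_right k p hk) hyne
      · exact ⟨hne, h1⟩
    · rcases (Pw_odd_iff k p hk hp y x hy hey).mp h with h1 | h1 | h1 | h1
      · rw [h1] at hxne; exact absurd rfl hxne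
      · exact absurd h1 hne
      · rw [h1] at hxne; exact absurd (uu_right k p hk) hxne
      · refine ⟨hne, ?_⟩
        rw [h1, uu_mul_uu_mul]
  · rintro ⟨hne, h⟩
    exact ⟨hne, Or.inl ((Pw_odd_iff k p hk hp x y hx hex).mpr (Or.inr (Or.inr (Or.inr h))))⟩

end AdjChar
section Final
variable (k p : ℕ)

lemma fromA (hk : 2 ≤ k) (a : Multiplicative (ZMod (Nn k p))) :
    fromModelF k p hk (Sum.inl a) = SemidirectProduct.inl a := rfl

lemma B_right (hk : 2 ≤ k) (i : Fin (cn k p)) :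
    (fromModelF k p hk (Sum.inr (Sum.inl i))).right = Multiplicative.ofAdd (1 : ZMod 2) := rfl

lemma C_right (hk : 2 ≤ k) (je : Fin (dn k p) × Fin 2) :
    (fromModelF k p hk (Sum.inr (Sum.inr je))).right = Multiplicative.ofAdd (1 : ZMod 2) := rfl

lemma B_val (hk : 2 ≤ k) (hp : 0 < p) (i : Fin (cn k p)) :
    (haveI : NeZero (Nn k p) := ⟨(Npos k p hp).ne'⟩;
      (Multiplicative.toAdd (fromModelF k p hk (Sum.inr (Sum.inl i))).left).val) = 2 * i.val := by
  haveI : NeZero (Nn k p) := ⟨(Npos k p hp).ne'⟩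
  have h2c := two_c k p hk
  have := i.isLt
  have e1 : cn k p = 2 ^ (k-1) * p := rfl
  exact ZMod.val_cast_of_lt (by omega)

lemma C_bound (hk : 2 ≤ k) (hp : 0 < p) (je : Fin (dn k p) × Fin 2) :
    2 * (je.1.val + je.2.val * dn k p) + 1 < Nn k p := by
  have h2c := two_c k p hk
  have h2d := two_d k p hk
  have h1 := je.1.isLt
  have h2 := je.2.isLt
  have hmul : je.2.val * dn k p ≤ 1 * dn k p := Nat.mul_le_mul_right _ (by omega)
  have e2 : dn k p = 2 ^ (k-2) * p := rfl
  omega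

lemma C_val (hk : 2 ≤ k) (hp : 0 < p) (je : Fin (dn k p) × Fin 2) :
    (haveI : NeZero (Nn k p) := ⟨(Npos k p hp).ne'⟩;
      (Multiplicative.toAdd (fromModelF k p hk (Sum.inr (Sum.inr je))).left).val)
      = 2 * (je.1.val + je.2.val * dn k p) + 1 := by
  haveI : NeZero (Nn k p) := ⟨(Npos k p hp).ne'⟩
  exact ZMod.val_cast_of_lt (C_bound k p hk hp je)

lemma C_odd (hk : 2 ≤ k) (hp : 0 < p) (je : Fin (dn k p) × Fin 2) :
    ¬ Even (haveI : NeZero (Nn k p) := ⟨(Npos k p hp).ne'⟩;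
      (Multiplicative.toAdd (fromModelF k p hk (Sum.inr (Sum.inr je))).left).val) := by
  rw [C_val k p hk hp je]
  intro h
  obtain ⟨j, hj⟩ := h
  omega

lemma B_even (hk : 2 ≤ k) (hp : 0 < p) (i : Fin (cn k p)) :
    Even (haveI : NeZero (Nn k p) := ⟨(Npos k p hp).ne'⟩;
      (Multiplicative.toAdd (fromModelF k p hk (Sum.inr (Sum.inl i))).left).val) := by
  rw [B_val k p hk hp i]
  exact ⟨i.val, by omega⟩

lemma fromInjective (hk : 2 ≤ k) (hp : 0 < p) :
    Function.Injective (fromModelF k p hk) :=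
  Function.LeftInverse.injective (right_inv_FM k p hk hp)

-- crux: the odd pair relation
lemma C_eq_uu_mul_C (hk : 2 ≤ k) (hp : 0 < p) (j1 j2 : Fin (dn k p)) (g1' g2' : Fin 2) :
    fromModelF k p hk (Sum.inr (Sum.inr (j2, g2'))) =
      uu k p hk * fromModelF k p hk (Sum.inr (Sum.inr (j1, g1'))) ↔
    (j2 = j1 ∧ g2' ≠ g1') := by
  haveI : NeZero (Nn k p) := ⟨(Npos k p hp).ne'⟩
  have h2c := two_c k p hk
  have h2d := two_d k p hk
  have hb1 := C_bound k p hk hp (j1, g1')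
  have hb2 := C_bound k p hk hp (j2, g2')
  set v1 := 2 * (j1.val + g1'.val * dn k p) + 1 with hv1
  set v2 := 2 * (j2.val + g2'.val * dn k p) + 1 with hv2
  have key : (fromModelF k p hk (Sum.inr (Sum.inr (j2, g2'))) =
      uu k p hk * fromModelF k p hk (Sum.inr (Sum.inr (j1, g1')))) ↔
      ((v2 : ZMod (Nn k p)) = cZ k p + (v1 : ZMod (Nn k p))) := by
    constructor
    · intro h
      have hl := congrArg SemidirectProduct.left h
      rw [uu_mul_left] at hl
      have := congrArg Multiplicative.toAdd hl
      exact this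
    · intro h
      have hr2 : (fromModelF k p hk (Sum.inr (Sum.inr (j1, g1')))).right
          = Multiplicative.ofAdd (1 : ZMod 2) := rfl
      ext
      · rw [uu_mul_left]
        show Multiplicative.ofAdd ((v2 : ZMod (Nn k p))) = _
        rw [h]
        rfl
      · rw [uu_mul_right]
        rfl
  rw [key]
  have hval : ((v2 : ZMod (Nn k p)) = cZ k p + (v1 : ZMod (Nn k p))) ↔
      v2 = (cn k p + v1) % Nn k p := by
    constructor
    · intro h
      have := congrArg ZMod.val h
      rwa [ZMod.val_cast_of_lt hb2, ZMod.val_add, cZ_val k p hk hp,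
        ZMod.val_cast_of_lt hb1] at this
    · intro h
      apply ZMod.val_injective
      rwa [ZMod.val_cast_of_lt hb2, ZMod.val_add, cZ_val k p hk hp,
        ZMod.val_cast_of_lt hb1]
  rw [hval]
  have hj1 := j1.isLt
  have hj2 := j2.isLt
  have hg1 := g1'.isLt
  have hg2 := g2'.isLt
  have hm1 : g1'.val * dn k p ≤ 1 * dn k p := Nat.mul_le_mul_right _ (by omega)
  have hm2 : g2'.val * dn k p ≤ 1 * dn k p := Nat.mul_le_mul_right _ (by omega)
  have hfj : (j2 = j1) ↔ j2.val = j1.val := ⟨congrArg _, Fin.ext⟩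
  have hfg : (g2' ≠ g1') ↔ ¬ (g2'.val = g1'.val) := by
    constructor
    · intro h hc; exact h (Fin.ext hc)
    · intro h hc; exact h (congrArg Fin.val hc)
  rw [hfj, hfg]
  have hdp := dpos k p hp
  have hg1c : g1'.val = 0 ∨ g1'.val = 1 := by omega
  have hg2c : g2'.val = 0 ∨ g2'.val = 1 := by omega
  have hw := mod_two_cases (a := cn k p + v1) (n := Nn k p) (by omega)
  clear key hval
  rcases hw with ⟨hlt, h⟩ | ⟨hge, h⟩ <;> rw [h] <;>
    rcases hg1c with h1 | h1 <;> rcases hg2c with h2 | h2 <;>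
      simp only [h1, h2, zero_mul, one_mul, Nat.add_zero] at hv1 hv2 <;> omega

-- model adjacency unfoldings
lemma model_adj_AA (a b : Multiplicative (ZMod (Nn k p))) :
    (modelGraph k p).Adj (Sum.inl a) (Sum.inl b) ↔
      (powerGraph (Multiplicative (ZMod (Nn k p)))).Adj a b := by
  rw [modelGraph, SimpleGraph.fromRel_adj]
  show Sum.inl a ≠ Sum.inl b ∧ ((powerGraph _).Adj a b ∨ (powerGraph _).Adj b a) ↔ _
  constructor
  · rintro ⟨hne, h | h⟩
    · exact h
    · exact h.symm
  · intro h
    exact ⟨fun hc => h.ne (by injection hc), Or.inl h⟩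

lemma model_adj_AB (a : Multiplicative (ZMod (Nn k p))) (i : Fin (cn k p)) :
    (modelGraph k p).Adj (Sum.inl a) (Sum.inr (Sum.inl i)) ↔ a = 1 := by
  rw [modelGraph, SimpleGraph.fromRel_adj]
  show Sum.inl a ≠ Sum.inr (Sum.inl i) ∧ (a = 1 ∨ False) ↔ _
  simp

lemma model_adj_AC (a : Multiplicative (ZMod (Nn k p))) (je : Fin (dn k p) × Fin 2) :
    (modelGraph k p).Adj (Sum.inl a) (Sum.inr (Sum.inr je)) ↔
      a = 1 ∨ a = Multiplicative.ofAdd (cZ k p) := by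
  rw [modelGraph, SimpleGraph.fromRel_adj]
  show Sum.inl a ≠ Sum.inr (Sum.inr je) ∧
    ((a = 1 ∨ a = Multiplicative.ofAdd ((cn k p : ℕ) : ZMod (Nn k p))) ∨ False) ↔ _
  rw [cZ]
  simp

lemma model_adj_BB (i i' : Fin (cn k p)) :
    ¬ (modelGraph k p).Adj (Sum.inr (Sum.inl i)) (Sum.inr (Sum.inl i')) := by
  rw [modelGraph, SimpleGraph.fromRel_adj]
  rintro ⟨-, h | h⟩ <;> exact h

lemma model_adj_BC (i : Fin (cn k p)) (je : Fin (dn k p) × Fin 2) :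
    ¬ (modelGraph k p).Adj (Sum.inr (Sum.inl i)) (Sum.inr (Sum.inr je)) := by
  rw [modelGraph, SimpleGraph.fromRel_adj]
  rintro ⟨-, h | h⟩ <;> exact h

lemma model_adj_CC (je je' : Fin (dn k p) × Fin 2) :
    (modelGraph k p).Adj (Sum.inr (Sum.inr je)) (Sum.inr (Sum.inr je')) ↔
      je ≠ je' ∧ je.1 = je'.1 := by
  rw [modelGraph, SimpleGraph.fromRel_adj]
  show Sum.inr (Sum.inr je) ≠ Sum.inr (Sum.inr je') ∧ (je.1 = je'.1 ∨ je'.1 = je.1) ↔ _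
  constructor
  · rintro ⟨hne, h | h⟩
    · exact ⟨fun hc => hne (by rw [hc]), h⟩
    · exact ⟨fun hc => hne (by rw [hc]), h.symm⟩
  · rintro ⟨hne, h⟩
    exact ⟨fun hc => hne (by injection (by injection hc : Sum.inr je = Sum.inr je')), Or.inl h⟩

-- the master adjacency transfer
lemma adj_transfer (hk : 2 ≤ k) (hp : 0 < p) (a b : ModelV k p) :
    (powerGraph (Mgp k p hk)).Adj (fromModelF k p hk a) (fromModelF k p hk b) ↔
      (modelGraph k p).Adj a b := by
  haveI : NeZero (Nn k p) := ⟨(Npos k p hp).ne'⟩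
  have hAone : ∀ c : Multiplicative (ZMod (Nn k p)),
      (SemidirectProduct.inl c : Mgp k p hk) = 1 ↔ c = 1 := by
    intro c
    rw [← map_one (SemidirectProduct.inl (φ := phi k p hk)), SemidirectProduct.inl_inj]
  have hAuu : ∀ c : Multiplicative (ZMod (Nn k p)),
      (SemidirectProduct.inl c : Mgp k p hk) = uu k p hk ↔
        c = Multiplicative.ofAdd (cZ k p) := by
    intro c
    rw [uu, SemidirectProduct.inl_inj]
  match a, b with
  | Sum.inl a, Sum.inl b =>
    rw [fromA, fromA, adj_AA, model_adj_AA]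
  | Sum.inl a, Sum.inr (Sum.inl i) =>
    rw [fromA, adj_A_even k p hk hp _ _ rfl (B_right k p hk i) (B_even k p hk hp i),
      model_adj_AB, hAone]
  | Sum.inl a, Sum.inr (Sum.inr je) =>
    rw [fromA, adj_A_odd k p hk hp _ _ rfl (C_right k p hk je) (C_odd k p hk hp je),
      model_adj_AC, hAone, hAuu]
  | Sum.inr (Sum.inl i), Sum.inl a =>
    rw [SimpleGraph.adj_comm, SimpleGraph.adj_comm (modelGraph k p)]
    rw [fromA, adj_A_even k p hk hp _ _ rfl (B_right k p hk i) (B_even k p hk hp i),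
      model_adj_AB, hAone]
  | Sum.inr (Sum.inr je), Sum.inl a =>
    rw [SimpleGraph.adj_comm, SimpleGraph.adj_comm (modelGraph k p)]
    rw [fromA, adj_A_odd k p hk hp _ _ rfl (C_right k p hk je) (C_odd k p hk hp je),
      model_adj_AC, hAone, hAuu]
  | Sum.inr (Sum.inl i), Sum.inr (Sum.inl i') =>
    constructor
    · intro h
      exact absurd h (adj_even_even k p hk hp _ _ (B_right k p hk i) (B_right k p hk i')
        (B_even k p hk hp i) (B_even k p hk hp i'))
    · intro h
      exact absurd h (model_adj_BB k p i i')
  | Sum.inr (Sum.inl i), Sum.inr (Sum.inr je) =>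
    constructor
    · intro h
      exact absurd h (adj_even_odd k p hk hp _ _ (B_right k p hk i) (C_right k p hk je)
        (B_even k p hk hp i) (C_odd k p hk hp je))
    · intro h
      exact absurd h (model_adj_BC k p i je)
  | Sum.inr (Sum.inr je), Sum.inr (Sum.inl i) =>
    rw [SimpleGraph.adj_comm, SimpleGraph.adj_comm (modelGraph k p)]
    constructor
    · intro h
      exact absurd h (adj_even_odd k p hk hp _ _ (B_right k p hk i) (C_right k p hk je)
        (B_even k p hk hp i) (C_odd k p hk hp je))
    · intro h
      exact absurd h (model_adj_BC k p i je)
  | Sum.inr (Sum.inr je), Sum.inr (Sum.inr je') =>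
    obtain ⟨j1, g1'⟩ := je
    obtain ⟨j2, g2'⟩ := je'
    rw [adj_odd_odd k p hk hp _ _ (C_right k p hk _) (C_right k p hk _)
      (C_odd k p hk hp _) (C_odd k p hk hp _), model_adj_CC]
    rw [C_eq_uu_mul_C k p hk hp j1 j2 g1' g2']
    constructor
    · rintro ⟨hne, hj, hg⟩
      refine ⟨?_, hj.symm⟩
      intro hc
      rw [Prod.mk.injEq] at hc
      exact hg (Fin.ext (congrArg Fin.val hc.2)).symm
    · rintro ⟨hne, hj⟩
      have hj' : j1 = j2 := hj
      have hgne : g1' ≠ g2' := by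
        intro hc
        exact hne (by rw [hj', hc])
      refine ⟨?_, hj'.symm, hgne.symm⟩
      intro hc
      apply hne
      exact Sum.inr_injective (Sum.inr_injective (fromInjective k p hk hp hc))
end Final
end PG
theorem powerGraph_structure (k p : ℕ) (hk : 2 ≤ k) (hp : p.Prime) (hodd : Odd p) :
    Nonempty (powerGraph (GKP k p) ≃g modelGraph k p) := by
  have hpp : 0 < p := hp.pos
  refine ⟨(PG.powerGraphIso (PG.isoGM k p hk hpp)).trans ?_⟩
  exact {
    toEquiv := PG.modelEquiv k p hk hpp
    map_rel_iff' := by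
      intro x y
      have h := PG.adj_transfer k p hk hpp (PG.toModelF k p hk hpp x) (PG.toModelF k p hk hpp y)
      rw [PG.left_inv_FM k p hk hpp, PG.left_inv_FM k p hk hpp] at h
      exact h.symm }
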